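/- Let g, k ∈ W and x ∈ G. Then f(kx,g) = f(x,g)·f(k,xgx^{-1}). In particular, if xgx^{-1} ∈ W_reg then f(kx,g) = f(x,g), so f(·,g) induces a well-defined map F_g : G/W → K, x̄ ↦ f(x,g), for g in a ray class of W. -/
import Mathlib


/-- A crystalline graded ring `A = K ◊_{σ,α} G` over a field `K`: `K` embeds in `A`
via `ι`, the `u_g` are units of `A`, `σ : G → Aut(K)` (a group morphism, since `K`
is commutative `σ_{gh} = σ_g σ_h`), `α : G × G → K^×` with `u_g r = σ_g(r) u_g`,
`u_g u_h = α(g,h) u_{gh}`, `α(g,e) = α(e,g) = 1`, the 2-cocycle relation, and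
`α(g,g⁻¹) = σ_g(α(g⁻¹,g))`; `A = ⊕_{g} K u_g` via `basis`. -/
structure CrysField (G K A : Type*) [Group G] [Field K] [Ring A] where
  ι : K →+* A
  inj : Function.Injective ι
  u : G → Aˣ
  σ : G →* RingAut K
  α : G → G → Kˣ
  u_one : u 1 = 1
  comm : ∀ (g : G) (r : K), (u g : A) * ι r = ι (σ g r) * (u g : A)
  mul_u : ∀ g h : G, (u g : A) * (u h : A) = ι (α g h) * (u (g * h) : A)
  α_one_left : ∀ g : G, α 1 g = 1
  α_one_right : ∀ g : G, α g 1 = 1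
  cocycle : ∀ g h t : G, (α g h : K) * α (g * h) t = σ g (α h t) * α g (h * t)
  α_inv : ∀ g : G, (α g g⁻¹ : K) = σ g (α g⁻¹ g)
  basis : Function.Bijective (fun f : G →₀ K => f.sum fun g r => ι r * (u g : A))

/-- For `g, k ∈ W = Ker σ` and `x ∈ G`, with `f(x,g) = α(x,g)/α(xgx⁻¹,x)`:
`f(kx,g) = f(x,g) · f(k,xgx⁻¹)`.  In particular, if `xgx⁻¹ ∈ W_reg` then
`f(kx,g) = f(x,g)`, so `f(·,g)` induces a well-defined map `F_g : G/W → K`. -/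
theorem f_coset_formula {G K A : Type*} [Group G] [Fintype G] [Field K] [Ring A]
    (P : CrysField G K A) (g k x : G) (hg : P.σ g = 1) (hk : P.σ k = 1) :
    ((P.α (k * x) g : K) / (P.α ((k * x) * g * (k * x)⁻¹) (k * x) : K) =
      ((P.α x g : K) / (P.α (x * g * x⁻¹) x : K)) *
        ((P.α k (x * g * x⁻¹) : K) /
          (P.α (k * (x * g * x⁻¹) * k⁻¹) k : K))) ∧
    ((∀ w : G, P.σ w = 1 →
        (P.α w (x * g * x⁻¹) : K) = P.α (w * (x * g * x⁻¹) * w⁻¹) w) →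
      (P.α (k * x) g : K) / (P.α ((k * x) * g * (k * x)⁻¹) (k * x) : K) =
        (P.α x g : K) / (P.α (x * g * x⁻¹) x : K)) := by
  have n : ∀ a b : G, (P.α a b : K) ≠ 0 := fun a b => (P.α a b).ne_zero
  have hg' : P.σ (x * g * x⁻¹) = 1 := by
    simp [map_mul, hg]
  have hkg' : P.σ (k * (x * g * x⁻¹) * k⁻¹) = 1 := by
    simp [map_mul, hk, hg']
  have hm3 : (k * x) * g * (k * x)⁻¹ = k * (x * g * x⁻¹) * k⁻¹ := by group
  have e1 : (P.α k x : K) * P.α (k * x) g = P.α x g * P.α k (x * g) := by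
    have := P.cocycle k x g
    rw [hk] at this
    simpa using this
  have e2 : (P.α (k * (x * g * x⁻¹) * k⁻¹) k : K) * P.α (k * (x * g * x⁻¹)) x
      = P.α k x * P.α (k * (x * g * x⁻¹) * k⁻¹) (k * x) := by
    have := P.cocycle (k * (x * g * x⁻¹) * k⁻¹) k x
    rw [hkg'] at this
    have hm : (k * (x * g * x⁻¹) * k⁻¹) * k = k * (x * g * x⁻¹) := by group
    rw [hm] at this
    simpa using this
  have e3 : (P.α k (x * g * x⁻¹) : K) * P.α (k * (x * g * x⁻¹)) x
      = P.α (x * g * x⁻¹) x * P.α k (x * g) := by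
    have := P.cocycle k (x * g * x⁻¹) x
    rw [hk] at this
    have hm : (x * g * x⁻¹) * x = x * g := by group
    rw [hm] at this
    simpa using this
  have main : (P.α (k * x) g : K) / (P.α ((k * x) * g * (k * x)⁻¹) (k * x) : K) =
      ((P.α x g : K) / (P.α (x * g * x⁻¹) x : K)) *
        ((P.α k (x * g * x⁻¹) : K) / (P.α (k * (x * g * x⁻¹) * k⁻¹) k : K)) := by
    rw [hm3, div_mul_div_comm, div_eq_div_iff
      (n (k * (x * g * x⁻¹) * k⁻¹) (k * x))
      (mul_ne_zero (n (x * g * x⁻¹) x) (n (k * (x * g * x⁻¹) * k⁻¹) k))]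
    have h12 := mul_ne_zero (n k x) (n (k * (x * g * x⁻¹)) x)
    apply mul_left_cancel₀ h12
    linear_combination ((P.α (k * (x * g * x⁻¹)) x : K) * P.α (x * g * x⁻¹) x * P.α (k * (x * g * x⁻¹) * k⁻¹) k) * e1
      + ((P.α x g : K) * P.α k (x * g * x⁻¹) * P.α (k * (x * g * x⁻¹)) x) * e2
      - ((P.α (k * (x * g * x⁻¹) * k⁻¹) k : K) * P.α (k * (x * g * x⁻¹)) x * P.α x g) * e3
  refine ⟨main, fun hw => ?_⟩
  rw [main, hw k hk, div_self (n (k * (x * g * x⁻¹) * k⁻¹) k), mul_one]
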